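/- Let b > 0 and 0 < δ < b, and let b_h ≥ 0 satisfy |b − b_h| ≤ δ. Then |Φ(−b) − Φ(−b_h)| ≤ K(b,δ) · δ · Φ(−b), where K(b,δ) := b + 2/b + 1/b³ + (b + 1/b)·(1 + 1/(b−δ)²)·exp((2bδ − δ²)/2). (This is the core estimate of Proposition 2.9 on the relative error of FORM estimates: if the distances b, b_h of two limit-state surfaces to the origin differ by at most δ, the FORM probabilities Φ(−b), Φ(−b_h) have relative error at most K(b,δ)·δ.) -/

import Mathlib

open MeasureTheory ProbabilityTheory Set Real Filter

/-- The standard normal cumulative distribution function. -/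
noncomputable def Phi (x : ℝ) : ℝ := (gaussianReal 0 1 (Set.Iic x)).toReal

lemma phi_eq (t : ℝ) : gaussianPDFReal 0 1 t = (Real.sqrt (2 * π))⁻¹ * Real.exp (-t ^ 2 / 2) := by
  simp [gaussianPDFReal]

lemma Phi_eq (x : ℝ) : Phi x = ∫ t in Iic x, gaussianPDFReal 0 1 t := by
  rw [Phi, gaussianReal_apply_eq_integral 0 one_ne_zero,
    ENNReal.toReal_ofReal (integral_nonneg fun t => gaussianPDFReal_nonneg 0 1 t)]

lemma Phi_diff {u v : ℝ} (h : u ≤ v) :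
    Phi v - Phi u = ∫ t in Ioc u v, gaussianPDFReal 0 1 t := by
  rw [Phi_eq, Phi_eq, ← Iic_union_Ioc_eq_Iic h,
    setIntegral_union (Iic_disjoint_Ioc le_rfl) measurableSet_Ioc
      ((integrable_gaussianPDFReal 0 1).integrableOn)
      ((integrable_gaussianPDFReal 0 1).integrableOn)]
  ring

lemma hasDerivAt_G (c : ℝ) (t : ℝ) :
    HasDerivAt (fun t : ℝ => -t / (1 + t ^ 2) * (c * Real.exp (-t ^ 2 / 2)))
      ((t ^ 4 + 2 * t ^ 2 - 1) / (1 + t ^ 2) ^ 2 * (c * Real.exp (-t ^ 2 / 2))) t := by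
  have h1 : (0:ℝ) < 1 + t ^ 2 := by positivity
  have hu : HasDerivAt (fun t : ℝ => -t / (1 + t ^ 2))
      ((t ^ 2 - 1) / (1 + t ^ 2) ^ 2) t := by
    have := (hasDerivAt_id t).neg.div
      (((hasDerivAt_id t).pow 2).const_add 1) h1.ne'
    refine this.congr_deriv ?_
    simp only [Pi.pow_apply, Pi.neg_apply, id]
    field_simp
    ring
  have hv : HasDerivAt (fun t : ℝ => c * Real.exp (-t ^ 2 / 2))
      (c * Real.exp (-t ^ 2 / 2) * (-t)) t := by
    have hexp : HasDerivAt (fun t : ℝ => Real.exp (-t ^ 2 / 2))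
        (Real.exp (-t ^ 2 / 2) * (-t)) t := by
      have h2 : HasDerivAt (fun t : ℝ => -t ^ 2 / 2) (-t) t := by
        have := ((hasDerivAt_id t).pow 2).neg.div_const 2
        refine this.congr_deriv ?_
        simp
        ring
      simpa [mul_comm] using h2.exp
    simpa [mul_assoc] using hexp.const_mul c
  have := hu.mul hv
  refine this.congr_deriv ?_
  field_simp
  ring

lemma tail_lower (b : ℝ) (hb : 0 < b) :
    gaussianPDFReal 0 1 b * (b / (1 + b ^ 2)) ≤ Phi (-b) := by
  set c : ℝ := (Real.sqrt (2 * π))⁻¹ with hc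
  have hcpos : 0 < c := by
    rw [hc]
    positivity
  set G : ℝ → ℝ := fun t => -t / (1 + t ^ 2) * (c * Real.exp (-t ^ 2 / 2)) with hG
  set G' : ℝ → ℝ := fun t =>
    (t ^ 4 + 2 * t ^ 2 - 1) / (1 + t ^ 2) ^ 2 * (c * Real.exp (-t ^ 2 / 2)) with hG'
  have hd : ∀ t : ℝ, HasDerivAt G (G' t) t := fun t => hasDerivAt_G c t
  have hbound : ∀ t : ℝ, |G' t| ≤ gaussianPDFReal 0 1 t := by
    intro t
    rw [phi_eq, ← hc]
    have h2 : |(t ^ 4 + 2 * t ^ 2 - 1) / (1 + t ^ 2) ^ 2| ≤ 1 := by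
      rw [abs_div, abs_of_pos (by positivity : (0:ℝ) < (1 + t ^ 2) ^ 2),
        div_le_one (by positivity), abs_le]
      constructor <;> nlinarith [sq_nonneg t, sq_nonneg (t ^ 2), sq_nonneg (t ^ 2 + 1)]
    calc |G' t| = |(t ^ 4 + 2 * t ^ 2 - 1) / (1 + t ^ 2) ^ 2| * |c * Real.exp (-t ^ 2 / 2)| := by
          rw [hG', abs_mul]
      _ ≤ 1 * |c * Real.exp (-t ^ 2 / 2)| := mul_le_mul_of_nonneg_right h2 (abs_nonneg _)
      _ = c * Real.exp (-t ^ 2 / 2) := by rw [one_mul, abs_of_pos (by positivity)]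
  have hint : IntegrableOn G' (Iic (-b)) := by
    apply Integrable.mono ((integrable_gaussianPDFReal 0 1).integrableOn)
    · refine (Continuous.aestronglyMeasurable ?_).restrict
      exact (Continuous.div (by fun_prop) (by fun_prop)
        (fun t => by positivity)).mul (by fun_prop)
    · filter_upwards with t
      rw [Real.norm_eq_abs, Real.norm_eq_abs, abs_of_nonneg (gaussianPDFReal_nonneg 0 1 t)]
      exact hbound t
  have htend : Tendsto G atBot (nhds 0) := by
    have hexp : Tendsto (fun t : ℝ => c * Real.exp (-t ^ 2 / 2)) atBot (nhds 0) := by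
      rw [show (0:ℝ) = c * 0 by ring]
      refine Tendsto.const_mul _ (Real.tendsto_exp_atBot.comp ?_)
      have hsq : Tendsto (fun t : ℝ => t ^ 2) atBot atTop := by
        refine tendsto_atTop_mono' atBot ?_ tendsto_neg_atBot_atTop
        filter_upwards [eventually_le_atBot (-1 : ℝ)] with t ht
        nlinarith
      exact (tendsto_neg_atTop_atBot.comp hsq).atBot_div_const two_pos
    apply squeeze_zero_norm _ hexp
    intro t
    rw [hG, norm_mul, Real.norm_eq_abs, Real.norm_eq_abs]
    have h1 : |(-t) / (1 + t ^ 2)| ≤ 1 := by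
      rw [abs_div, abs_of_pos (by positivity : (0:ℝ) < 1 + t ^ 2),
        div_le_one (by positivity)]
      cases abs_cases t with
      | inl h => rw [abs_neg, h.1]; nlinarith [sq_nonneg (t - 1)]
      | inr h => rw [abs_neg, h.1]; nlinarith [sq_nonneg (t + 1)]
    calc |(-t) / (1 + t ^ 2)| * |c * Real.exp (-t ^ 2 / 2)|
        ≤ 1 * |c * Real.exp (-t ^ 2 / 2)| := mul_le_mul_of_nonneg_right h1 (abs_nonneg _)
      _ = c * Real.exp (-t ^ 2 / 2) := by rw [one_mul, abs_of_pos (by positivity)]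
  have hFTC : ∫ t in Iic (-b), G' t = G (-b) - 0 :=
    integral_Iic_of_hasDerivAt_of_tendsto' (fun t _ => hd t) hint htend
  have hmono : ∫ t in Iic (-b), G' t ≤ ∫ t in Iic (-b), gaussianPDFReal 0 1 t := by
    apply setIntegral_mono_on hint ((integrable_gaussianPDFReal 0 1).integrableOn)
      measurableSet_Iic
    intro t _
    exact le_trans (le_abs_self _) (hbound t)
  rw [Phi_eq]
  refine le_trans ?_ hmono
  rw [hFTC, sub_zero]
  have : G (-b) = gaussianPDFReal 0 1 b * (b / (1 + b ^ 2)) := by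
    rw [hG, phi_eq]
    simp only [neg_neg, neg_sq]
    ring
  rw [this]

lemma Phi_mono {u v : ℝ} (h : u ≤ v) : Phi u ≤ Phi v := by
  have h1 := Phi_diff h
  have h2 : 0 ≤ ∫ t in Ioc u v, gaussianPDFReal 0 1 t :=
    setIntegral_nonneg measurableSet_Ioc (fun t _ => gaussianPDFReal_nonneg 0 1 t)
  linarith

lemma Phi_nonneg (x : ℝ) : 0 ≤ Phi x := ENNReal.toReal_nonneg

/-- Core estimate of Proposition 2.9: if the distances `b`, `b_h` of two limit-state
surfaces to the origin differ by at most `δ`, then the FORM probabilities `Φ(-b)`,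
`Φ(-b_h)` have relative error at most `K(b, δ) · δ`. -/
theorem form_relative_error (b δ b_h : ℝ) (hb : 0 < b) (hδ : 0 < δ) (hδb : δ < b)
    (hbh : 0 ≤ b_h) (hdist : |b - b_h| ≤ δ) :
    |Phi (-b) - Phi (-b_h)| ≤
      (b + 2 / b + 1 / b ^ 3 +
        (b + 1 / b) * (1 + 1 / (b - δ) ^ 2) * Real.exp ((2 * b * δ - δ ^ 2) / 2)) * δ *
        Phi (-b) := by
  obtain ⟨hd1, hd2⟩ := abs_le.mp hdist
  set m : ℝ := min b b_h with hm
  set M : ℝ := max b b_h with hM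
  have hmM : m ≤ M := min_le_max
  have hbm : b - δ ≤ m := le_min (by linarith) (by linarith)
  have hmpos : 0 < b - δ := by linarith
  have hMm : M - m ≤ δ := by
    rcases le_total b b_h with h | h
    · rw [hm, hM, min_eq_left h, max_eq_right h]; linarith
    · rw [hm, hM, min_eq_right h, max_eq_left h]; linarith
  set E : ℝ := Real.exp ((2 * b * δ - δ ^ 2) / 2) with hE
  have hEpos : 0 < E := Real.exp_pos _
  set C : ℝ := gaussianPDFReal 0 1 (b - δ) with hC
  -- |Phi(-b) - Phi(-b_h)| = Phi(-m) - Phi(-M)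
  have key : |Phi (-b) - Phi (-b_h)| = Phi (-m) - Phi (-M) := by
    rcases le_total b b_h with h | h
    · rw [hm, hM, min_eq_left h, max_eq_right h,
        abs_of_nonneg (sub_nonneg.mpr (Phi_mono (neg_le_neg h)))]
    · rw [hm, hM, min_eq_right h, max_eq_left h,
        abs_of_nonpos (sub_nonpos.mpr (Phi_mono (neg_le_neg h)))]
      ring
  -- the difference is an integral over Ioc (-M) (-m)
  have hdiffInt : Phi (-m) - Phi (-M) = ∫ t in Ioc (-M) (-m), gaussianPDFReal 0 1 t :=
    Phi_diff (neg_le_neg hmM)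
  -- pointwise bound by C on the interval
  have hpt : ∀ t ∈ Ioc (-M) (-m), gaussianPDFReal 0 1 t ≤ C := by
    intro t ht
    rw [hC, phi_eq, phi_eq]
    have h1 : t ≤ -(b - δ) := le_trans ht.2 (neg_le_neg hbm)
    have h2 : (b - δ) ^ 2 ≤ t ^ 2 := by nlinarith
    have h3 : -t ^ 2 / 2 ≤ -(b - δ) ^ 2 / 2 := by linarith
    exact mul_le_mul_of_nonneg_left (Real.exp_le_exp.mpr h3) (by positivity)
  -- bound the integral
  have hintC : ∫ t in Ioc (-M) (-m), gaussianPDFReal 0 1 t ≤ (M - m) * C := by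
    have hconst : ∫ _ in Ioc (-M) (-m), C = (M - m) * C := by
      rw [setIntegral_const, measureReal_def, Real.volume_Ioc, smul_eq_mul,
        ENNReal.toReal_ofReal (by linarith : (0:ℝ) ≤ -m - -M)]
      ring
    rw [← hconst]
    exact setIntegral_mono_on ((integrable_gaussianPDFReal 0 1).integrableOn)
      (integrableOn_const measure_Ioc_lt_top.ne) measurableSet_Ioc hpt
  -- C = φ(b) * E
  have hCE : C = gaussianPDFReal 0 1 b * E := by
    rw [hC, phi_eq, phi_eq, hE, mul_assoc, ← Real.exp_add]
    ring_nf
  have hCnn : 0 ≤ C := gaussianPDFReal_nonneg 0 1 _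
  -- φ(b) ≤ (b + 1/b) * Phi(-b)
  have hφb : gaussianPDFReal 0 1 b ≤ (b + 1 / b) * Phi (-b) := by
    have h3 := tail_lower b hb
    have hb1 : (0:ℝ) < 1 + b ^ 2 := by positivity
    have e1 : b + 1 / b = (1 + b ^ 2) / b := by field_simp; ring
    rw [e1, div_mul_eq_mul_div, le_div_iff₀ hb]
    have h5 := mul_le_mul_of_nonneg_right h3 hb1.le
    have e2 : gaussianPDFReal 0 1 b * (b / (1 + b ^ 2)) * (1 + b ^ 2)
        = gaussianPDFReal 0 1 b * b := by field_simp
    nlinarith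
  have hP := Phi_nonneg (-b)
  -- main chain
  rw [key, hdiffInt]
  have step1 : ∫ t in Ioc (-M) (-m), gaussianPDFReal 0 1 t ≤ δ * C := by
    refine le_trans hintC (mul_le_mul_of_nonneg_right hMm hCnn)
  refine le_trans step1 ?_
  rw [hCE]
  have step2 : gaussianPDFReal 0 1 b * E ≤ (b + 1 / b) * Phi (-b) * E :=
    mul_le_mul_of_nonneg_right hφb hEpos.le
  have hA : (0:ℝ) ≤ b + 2 / b + 1 / b ^ 3 := by positivity
  have hs : (0:ℝ) ≤ 1 / (b - δ) ^ 2 := by positivity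
  have hb1b : (0:ℝ) ≤ b + 1 / b := by positivity
  nlinarith [mul_le_mul_of_nonneg_left step2 hδ.le,
    mul_nonneg (mul_nonneg hδ.le hP) hA,
    mul_nonneg (mul_nonneg (mul_nonneg hδ.le hP) (mul_nonneg hb1b hs)) hEpos.le]
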